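/- Let w : ℝ² → ℝ be a bounded differentiable function whose gradient is bounded, with ‖w‖∞ = sup_{z∈ℝ²} |w(z)| and ‖∇w‖∞ = sup_{z∈ℝ²} ‖∇w(z)‖₂. If u = (a,b) and v = (c,d) in ℝ² satisfy a ≤ c ≤ b ≤ d (overlapping, non-nested intervals), then for any L ≥ max{b−a, d−c}, ∫_ℝ |w(u)·χ_{[a,b)}(t) − w(v)·χ_{[c,d)}(t)| dt ≤ (‖w‖∞ + L·‖∇w‖∞)·‖u−v‖₁, where ‖u−v‖₁ = |a−c| + |b−d|. -/

import Mathlib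

open MeasureTheory

/-- The indicator function of the half-open interval `[a, b)`. -/
noncomputable def chiIco (a b t : ℝ) : ℝ :=
  Set.indicator (Set.Ico a b) (fun _ => (1 : ℝ)) t

/-- The point `(a, b)` viewed as an element of the Euclidean plane `ℝ²`. -/
noncomputable def pt (a b : ℝ) : EuclideanSpace ℝ (Fin 2) :=
  (WithLp.equiv 2 (Fin 2 → ℝ)).symm ![a, b]

lemma norm_fderiv_eq_norm_gradient (w : EuclideanSpace ℝ (Fin 2) → ℝ) (z : EuclideanSpace ℝ (Fin 2)) :
    ‖fderiv ℝ w z‖ = ‖gradient w z‖ := by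
  rw [gradient]
  rw [LinearIsometryEquiv.norm_map]

lemma pt_sub_norm (a b c d : ℝ) : ‖pt a b - pt c d‖ ≤ |a - c| + |b - d| := by
  have h : pt a b - pt c d = pt (a - c) (b - d) := by
    simp [pt]
    ext i
    fin_cases i <;> simp [WithLp.equiv_symm_apply]
  rw [h]
  have hnorm : ‖pt (a - c) (b - d)‖ = Real.sqrt ((a - c)^2 + (b - d)^2) := by
    rw [EuclideanSpace.norm_eq]
    congr 1
    rw [Fin.sum_univ_two]
    simp [pt, WithLp.equiv_symm_apply, sq_abs]
  rw [hnorm]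
  rw [show |a - c| + |b - d| = Real.sqrt ((|a-c| + |b-d|)^2) from
    (Real.sqrt_sq (by positivity)).symm]
  apply Real.sqrt_le_sqrt
  nlinarith [sq_abs (a - c), sq_abs (b - d), mul_nonneg (abs_nonneg (a-c)) (abs_nonneg (b-d))]

/-- **Case 1 of Lemma 1 (overlapping, non-nested intervals).** If `w : ℝ² → ℝ` is a
bounded differentiable function whose gradient is bounded (`W` bounds `|w|`, `Wg` bounds
the Euclidean norm of `∇w`) and `a ≤ c ≤ b ≤ d`, then for any `L ≥ max (b-a) (d-c)`,
`∫ℝ |w(u)·χ_{[a,b)}(t) − w(v)·χ_{[c,d)}(t)| dt ≤ (W + L·Wg)·(|a−c| + |b−d|)`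
where `u = (a,b)` and `v = (c,d)`. -/
theorem betti_term_stability_overlapping
    (w : EuclideanSpace ℝ (Fin 2) → ℝ) (W Wg : ℝ)
    (hdiff : Differentiable ℝ w)
    (hW : ∀ z, |w z| ≤ W)
    (hWg : ∀ z, ‖gradient w z‖ ≤ Wg)
    (a b c d L : ℝ) (hac : a ≤ c) (hcb : c ≤ b) (hbd : b ≤ d)
    (hL : max (b - a) (d - c) ≤ L) :
    ∫ t : ℝ, |w (pt a b) * chiIco a b t - w (pt c d) * chiIco c d t|
      ≤ (W + L * Wg) * (|a - c| + |b - d|) := by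
  set u := pt a b
  set v := pt c d
  set k₁ := |w u|
  set k₂ := |w u - w v|
  set k₃ := |w v|
  -- pointwise identity
  have hab : ∀ p q t : ℝ, chiIco p q t = if p ≤ t ∧ t < q then (1:ℝ) else 0 := fun p q t => by
    simp [chiIco, Set.indicator_apply, Set.mem_Ico]
  have hpt : ∀ t : ℝ, |w u * chiIco a b t - w v * chiIco c d t| =
      (Set.Ico a c).indicator (fun _ => k₁) t + (Set.Ico c b).indicator (fun _ => k₂) t
        + (Set.Ico b d).indicator (fun _ => k₃) t := by
    intro t
    rw [hab, hab, Set.indicator_apply, Set.indicator_apply, Set.indicator_apply]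
    simp only [Set.mem_Ico]
    rcases lt_or_ge t a with h1 | h1
    · rw [if_neg (by rintro ⟨h, h'⟩; linarith), if_neg (by rintro ⟨h, h'⟩; linarith),
        if_neg (by rintro ⟨h, h'⟩; linarith), if_neg (by rintro ⟨h, h'⟩; linarith),
        if_neg (by rintro ⟨h, h'⟩; linarith)]
      simp
    · rcases lt_or_ge t c with h2 | h2
      · rw [if_pos ⟨h1, by linarith⟩, if_neg (by rintro ⟨h, h'⟩; linarith),
          if_pos ⟨h1, h2⟩, if_neg (by rintro ⟨h, h'⟩; linarith),
          if_neg (by rintro ⟨h, h'⟩; linarith)]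
        simp [k₁]
      · rcases lt_or_ge t b with h3 | h3
        · rw [if_pos ⟨h1, h3⟩, if_pos ⟨h2, by linarith⟩,
            if_neg (by rintro ⟨h, h'⟩; linarith), if_pos ⟨h2, h3⟩,
            if_neg (by rintro ⟨h, h'⟩; linarith)]
          simp [k₂]
        · rcases lt_or_ge t d with h4 | h4
          · rw [if_neg (by rintro ⟨h, h'⟩; linarith), if_pos ⟨by linarith, h4⟩,
              if_neg (by rintro ⟨h, h'⟩; linarith), if_neg (by rintro ⟨h, h'⟩; linarith),
              if_pos ⟨h3, h4⟩]
            simp [k₃]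
          · rw [if_neg (by rintro ⟨h, h'⟩; linarith), if_neg (by rintro ⟨h, h'⟩; linarith),
              if_neg (by rintro ⟨h, h'⟩; linarith), if_neg (by rintro ⟨h, h'⟩; linarith),
              if_neg (by rintro ⟨h, h'⟩; linarith)]
            simp
  have hintg : ∀ (p q : ℝ) (k : ℝ), Integrable ((Set.Ico p q).indicator (fun _ => k)) := by
    intro p q k
    rw [integrable_indicator_iff measurableSet_Ico]
    exact integrableOn_const measure_Ico_lt_top.ne
  have hval : ∀ (p q : ℝ) (k : ℝ), p ≤ q →
      ∫ t : ℝ, (Set.Ico p q).indicator (fun _ => k) t = k * (q - p) := by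
    intro p q k hpq
    rw [integral_indicator measurableSet_Ico, setIntegral_const, measureReal_def, Real.volume_Ico,
      ENNReal.toReal_ofReal (by linarith), smul_eq_mul, mul_comm]
  have hint : ∫ t : ℝ, |w u * chiIco a b t - w v * chiIco c d t|
      = k₁ * (c - a) + k₂ * (b - c) + k₃ * (d - b) := by
    calc ∫ t : ℝ, |w u * chiIco a b t - w v * chiIco c d t|
        = ∫ t : ℝ, ((Set.Ico a c).indicator (fun _ => k₁) t
            + (Set.Ico c b).indicator (fun _ => k₂) t
            + (Set.Ico b d).indicator (fun _ => k₃) t) := by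
          exact integral_congr_ae (Filter.Eventually.of_forall hpt)
      _ = k₁ * (c - a) + k₂ * (b - c) + k₃ * (d - b) := by
          have I12 : Integrable (fun t : ℝ => (Set.Ico a c).indicator (fun _ => k₁) t
              + (Set.Ico c b).indicator (fun _ => k₂) t) := (hintg a c k₁).add (hintg c b k₂)
          rw [integral_add I12 (hintg b d k₃),
            integral_add (hintg a c k₁) (hintg c b k₂),
            hval a c k₁ hac, hval c b k₂ hcb, hval b d k₃ hbd]
  rw [hint]
  -- bounds
  have hW0 : 0 ≤ W := le_trans (abs_nonneg _) (hW u)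
  have hWg0 : 0 ≤ Wg := le_trans (norm_nonneg _) (hWg u)
  have hk2 : k₂ ≤ Wg * ((c - a) + (d - b)) := by
    have hmvt : ‖w u - w v‖ ≤ Wg * ‖u - v‖ := by
      apply (convex_univ : Convex ℝ (Set.univ : Set (EuclideanSpace ℝ (Fin 2)))).norm_image_sub_le_of_norm_fderiv_le
        (fun x _ => hdiff x)
        (fun x _ => by rw [norm_fderiv_eq_norm_gradient]; exact hWg x)
        (Set.mem_univ v) (Set.mem_univ u)
    have huv : ‖u - v‖ ≤ (c - a) + (d - b) := by
      have := pt_sub_norm a b c d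
      rw [abs_of_nonpos (by linarith), abs_of_nonpos (by linarith)] at this
      simpa [u, v] using (by linarith : ‖pt a b - pt c d‖ ≤ (c - a) + (d - b))
    calc k₂ = ‖w u - w v‖ := rfl
      _ ≤ Wg * ‖u - v‖ := hmvt
      _ ≤ Wg * ((c - a) + (d - b)) := by
          exact mul_le_mul_of_nonneg_left huv hWg0
  have hd : |a - c| + |b - d| = (c - a) + (d - b) := by
    rw [abs_of_nonpos (by linarith), abs_of_nonpos (by linarith)]; ring
  rw [hd]
  have hbcL : b - c ≤ L := le_trans (by linarith) (le_trans (le_max_left _ _) hL)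
  have hk2' : k₂ * (b - c) ≤ (Wg * ((c - a) + (d - b))) * L := by
    calc k₂ * (b - c) ≤ (Wg * ((c - a) + (d - b))) * (b - c) :=
          mul_le_mul_of_nonneg_right hk2 (by linarith)
      _ ≤ (Wg * ((c - a) + (d - b))) * L := by
          exact mul_le_mul_of_nonneg_left hbcL
            (mul_nonneg hWg0 (by linarith))
  have h1 : k₁ ≤ W := hW u
  have h3 : k₃ ≤ W := hW v
  nlinarith [mul_le_mul_of_nonneg_right h1 (by linarith : (0:ℝ) ≤ c - a),
    mul_le_mul_of_nonneg_right h3 (by linarith : (0:ℝ) ≤ d - b)]
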